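/- arXiv:2410.14802 — 7 statements merged into one kernel-verified Lean document; each statement's English description precedes it below -/
import Mathlib

section
/- Let x : ℝ → ℝ^{d₁} and y : ℝ → ℝ^{d₂} be differentiable curves and let G : ℝ → Matrix (Fin d₁) (Fin d₂) ℝ be any function such that for every t the derivatives satisfy x'(t) = −G(t) · y(t) and y'(t) = −G(t)ᵀ · x(t) (matrix–vector products). Then the quantity ‖x(t)‖² − ‖y(t)‖² is constant in t; equivalently, for every t, the derivative of t ↦ ‖x(t)‖² − ‖y(t)‖² is zero. -/
open scoped RealInnerProductSpace Matrix

/-- Matrix–vector product as a map between Euclidean spaces. -/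
noncomputable def mv {d₁ d₂ : ℕ} (A : Matrix (Fin d₁) (Fin d₂) ℝ)
    (v : EuclideanSpace ℝ (Fin d₂)) : EuclideanSpace ℝ (Fin d₁) :=
  WithLp.toLp 2 (A.mulVec v)

lemma mv_inner {d₁ d₂ : ℕ} (A : Matrix (Fin d₁) (Fin d₂) ℝ)
    (v : EuclideanSpace ℝ (Fin d₂)) (w : EuclideanSpace ℝ (Fin d₁)) :
    ⟪mv A v, w⟫ = ⟪v, mv Aᵀ w⟫ := by
  simp only [mv, PiLp.toLp_apply, PiLp.inner_apply, RCLike.inner_apply, conj_trivial,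
    Matrix.mulVec, dotProduct, Matrix.transpose_apply,
    Finset.sum_mul, Finset.mul_sum]
  rw [Finset.sum_comm]
  exact Finset.sum_congr rfl fun i _ => Finset.sum_congr rfl fun j _ => by ring

/-- SGD gradient flow on the non-overparametrized problem conserves balancedness. -/
theorem sgd_nop_balancedness_conserved {d₁ d₂ : ℕ}
    (x : ℝ → EuclideanSpace ℝ (Fin d₁)) (y : ℝ → EuclideanSpace ℝ (Fin d₂))
    (G : ℝ → Matrix (Fin d₁) (Fin d₂) ℝ)
    (hx : ∀ t, HasDerivAt x (-(mv (G t) (y t))) t)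
    (hy : ∀ t, HasDerivAt y (-(mv (G t)ᵀ (x t))) t) :
    (∀ s t : ℝ, ‖x s‖ ^ 2 - ‖y s‖ ^ 2 = ‖x t‖ ^ 2 - ‖y t‖ ^ 2) ∧
    (∀ t, HasDerivAt (fun s => ‖x s‖ ^ 2 - ‖y s‖ ^ 2) 0 t) := by
  have hderiv : ∀ t, HasDerivAt (fun s => ‖x s‖ ^ 2 - ‖y s‖ ^ 2) 0 t := by
    intro t
    have h1 : HasDerivAt (fun s => ⟪x s, x s⟫)
        (⟪x t, -(mv (G t) (y t))⟫ + ⟪-(mv (G t) (y t)), x t⟫) t :=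
      (hx t).inner ℝ (hx t)
    have h2 : HasDerivAt (fun s => ⟪y s, y s⟫)
        (⟪y t, -(mv (G t)ᵀ (x t))⟫ + ⟪-(mv (G t)ᵀ (x t)), y t⟫) t :=
      (hy t).inner ℝ (hy t)
    have h3 := h1.sub h2
    have key : (⟪x t, -(mv (G t) (y t))⟫ + ⟪-(mv (G t) (y t)), x t⟫) -
        (⟪y t, -(mv (G t)ᵀ (x t))⟫ + ⟪-(mv (G t)ᵀ (x t)), y t⟫) = (0 : ℝ) := by
      have h := mv_inner (G t) (y t) (x t)
      simp only [inner_neg_left, inner_neg_right]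
      have hc1 : ⟪x t, mv (G t) (y t)⟫ = ⟪mv (G t) (y t), x t⟫ := real_inner_comm _ _
      have hc2 : ⟪mv (G t)ᵀ (x t), y t⟫ = ⟪y t, mv (G t)ᵀ (x t)⟫ := real_inner_comm _ _
      linarith [hc1, hc2, h]
    rw [key] at h3
    have h4 : (fun s => ‖x s‖ ^ 2 - ‖y s‖ ^ 2) =
        ((fun s => ⟪x s, x s⟫) - fun s => ⟪y s, y s⟫) := by
      funext s
      simp only [Pi.sub_apply, real_inner_self_eq_norm_sq]
    rw [h4]
    exact h3
  refine ⟨fun s t => ?_, hderiv⟩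
  have key : ∀ a b : ℝ, a ≤ b →
      (fun s => ‖x s‖ ^ 2 - ‖y s‖ ^ 2) b = (fun s => ‖x s‖ ^ 2 - ‖y s‖ ^ 2) a := by
    intro a b hab
    exact constant_of_has_deriv_right_zero
      (fun u _ => (hderiv u).continuousAt.continuousWithinAt)
      (fun u _ => (hderiv u).hasDerivWithinAt) b ⟨hab, le_refl b⟩
  rcases le_total s t with h | h
  · exact (key s t h).symm
  · exact key t s h
end

section
/- Let x : ℝ → ℝ^{d₁} and y : ℝ → ℝ^{d₂} be differentiable curves and let G : ℝ → Matrix (Fin d₁) (Fin d₂) ℝ be any function such that for every t one has ‖G(t)·y(t)‖² + ‖G(t)ᵀ·x(t)‖² > 0 and the derivatives satisfy x'(t) = −(G(t)·y(t)) / √(‖G(t)·y(t)‖² + ‖G(t)ᵀ·x(t)‖²) and y'(t) = −(G(t)ᵀ·x(t)) / √(‖G(t)·y(t)‖² + ‖G(t)ᵀ·x(t)‖²). Then ‖x(t)‖² − ‖y(t)‖² is constant in t. -/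
open scoped RealInnerProductSpace Matrix

lemma inner_mv {d₁ d₂ : ℕ} (A : Matrix (Fin d₁) (Fin d₂) ℝ)
    (v : EuclideanSpace ℝ (Fin d₂)) (u : EuclideanSpace ℝ (Fin d₁)) :
    ⟪mv A v, u⟫ = ⟪v, mv Aᵀ u⟫ := by
  simp only [mv, PiLp.inner_apply, RCLike.inner_apply, starRingEnd_apply, star_trivial,
    Matrix.mulVec, dotProduct, Matrix.transpose_apply, Finset.sum_mul, Finset.mul_sum]
  rw [Finset.sum_comm]
  apply Finset.sum_congr rfl; intro i _; apply Finset.sum_congr rfl; intro j _; ring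

/-- SNGD gradient flow on the non-overparametrized problem conserves balancedness. -/
theorem sngd_nop_balancedness_conserved {d₁ d₂ : ℕ}
    (x : ℝ → EuclideanSpace ℝ (Fin d₁)) (y : ℝ → EuclideanSpace ℝ (Fin d₂))
    (G : ℝ → Matrix (Fin d₁) (Fin d₂) ℝ)
    (hpos : ∀ t, 0 < ‖mv (G t) (y t)‖ ^ 2 + ‖mv (G t)ᵀ (x t)‖ ^ 2)
    (hx : ∀ t, HasDerivAt x
      (-((Real.sqrt (‖mv (G t) (y t)‖ ^ 2 + ‖mv (G t)ᵀ (x t)‖ ^ 2))⁻¹ • mv (G t) (y t))) t)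
    (hy : ∀ t, HasDerivAt y
      (-((Real.sqrt (‖mv (G t) (y t)‖ ^ 2 + ‖mv (G t)ᵀ (x t)‖ ^ 2))⁻¹ • mv (G t)ᵀ (x t))) t) :
    ∀ s t : ℝ, ‖x s‖ ^ 2 - ‖y s‖ ^ 2 = ‖x t‖ ^ 2 - ‖y t‖ ^ 2 := by
  have key : ∀ t, HasDerivAt (fun t => ‖x t‖ ^ 2 - ‖y t‖ ^ 2) 0 t := by
    intro t
    set c : ℝ := (Real.sqrt (‖mv (G t) (y t)‖ ^ 2 + ‖mv (G t)ᵀ (x t)‖ ^ 2))⁻¹ with hc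
    have hX : HasDerivAt (fun t => ‖x t‖ ^ 2)
        (⟪x t, -(c • mv (G t) (y t))⟫ + ⟪-(c • mv (G t) (y t)), x t⟫) t := by
      have := (hx t).inner ℝ (hx t)
      simpa only [real_inner_self_eq_norm_sq] using this
    have hY : HasDerivAt (fun t => ‖y t‖ ^ 2)
        (⟪y t, -(c • mv (G t)ᵀ (x t))⟫ + ⟪-(c • mv (G t)ᵀ (x t)), y t⟫) t := by
      have := (hy t).inner ℝ (hy t)
      simpa only [real_inner_self_eq_norm_sq] using this
    have := hX.sub hY
    have hadj := inner_mv (G t) (y t) (x t)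
    have heq : (⟪x t, -(c • mv (G t) (y t))⟫ + ⟪-(c • mv (G t) (y t)), x t⟫) -
        (⟪y t, -(c • mv (G t)ᵀ (x t))⟫ + ⟪-(c • mv (G t)ᵀ (x t)), y t⟫) = 0 := by
      have hadj' : ⟪x t, mv (G t) (y t)⟫ = ⟪y t, mv (G t)ᵀ (x t)⟫ := by
        rw [real_inner_comm]; exact hadj
      simp only [inner_neg_left, inner_neg_right, real_inner_smul_left,
        real_inner_smul_right, hadj']
      rw [hadj, real_inner_comm (mv (G t)ᵀ (x t)) (y t)]
      ring
    rwa [heq] at this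
  intro s t
  exact is_const_of_deriv_eq_zero (fun u => (key u).differentiableAt)
    (fun u => (key u).deriv) s t
end

section
/- Let x, y : ℝ → ℝ^d be differentiable curves and let c : ℝ → ℝ be any function such that for every t the quantity ‖c(t) • y(t)‖² + ‖c(t) • x(t)‖² is positive and the derivatives satisfy x'(t) = −(c(t) • y(t)) / √(‖c(t) • y(t)‖² + ‖c(t) • x(t)‖²) and y'(t) = −(c(t) • x(t)) / √(‖c(t) • y(t)‖² + ‖c(t) • x(t)‖²). Then ‖x(t)‖² − ‖y(t)‖² is constant in t. -/
open scoped RealInnerProductSpace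

/-- SNGD gradient flow on the overparametrized problem conserves balancedness. -/
theorem sngd_op_balancedness_conserved {d : ℕ}
    (x y : ℝ → EuclideanSpace ℝ (Fin d)) (c : ℝ → ℝ)
    (hpos : ∀ t, 0 < ‖c t • y t‖ ^ 2 + ‖c t • x t‖ ^ 2)
    (hx : ∀ t, HasDerivAt x
      (-((Real.sqrt (‖c t • y t‖ ^ 2 + ‖c t • x t‖ ^ 2))⁻¹ • (c t • y t))) t)
    (hy : ∀ t, HasDerivAt y
      (-((Real.sqrt (‖c t • y t‖ ^ 2 + ‖c t • x t‖ ^ 2))⁻¹ • (c t • x t))) t) :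
    ∀ s t : ℝ, ‖x s‖ ^ 2 - ‖y s‖ ^ 2 = ‖x t‖ ^ 2 - ‖y t‖ ^ 2 := by
  set F : ℝ → ℝ := fun t => ⟪x t, x t⟫ - ⟪y t, y t⟫ with hF
  have hderiv : ∀ t, HasDerivAt F 0 t := by
    intro t
    have h1 := ((hx t).inner ℝ (hx t)).sub ((hy t).inner ℝ (hy t))
    refine (HasDerivAt.congr_deriv h1 ?_ : HasDerivAt F 0 t)
    simp only [inner_neg_left, inner_neg_right, inner_smul_left, inner_smul_right,
      RCLike.conj_to_real]
    rw [real_inner_comm (y t) (x t)]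
    ring
  have hconst : ∀ s t : ℝ, F s = F t := by
    intro s t
    have : ∀ u : ℝ, deriv F u = 0 := fun u => (hderiv u).deriv
    have hd : Differentiable ℝ F := fun u => (hderiv u).differentiableAt
    have := is_const_of_deriv_eq_zero hd this s t
    exact this
  intro s t
  have := hconst s t
  simp only [hF, real_inner_self_eq_norm_sq] at this
  exact this
end

section
/- Let x ∈ ℝ^{d₁}, y ∈ ℝ^{d₂}, G ∈ Matrix (Fin d₁) (Fin d₂) ℝ with ‖G·y‖² + ‖Gᵀ·x‖² > 0, let ρ ≥ 0, set u := 1/√(‖G·y‖² + ‖Gᵀ·x‖²), and define the SAM-perturbed points x̃ := x + ρ u • (G·y) and ỹ := y + ρ u • (Gᵀ·x). Then ‖x̃ ỹᵀ − x yᵀ‖_F ≤ ρ (‖x‖ + ‖y‖) + ρ²/2, where x̃ ỹᵀ and x yᵀ denote outer products and ‖·‖_F the Frobenius norm. -/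
open scoped RealInnerProductSpace Matrix

/-- The outer product of two vectors, as a matrix. -/
noncomputable def outer {d₁ d₂ : ℕ} (x : EuclideanSpace ℝ (Fin d₁))
    (y : EuclideanSpace ℝ (Fin d₂)) : Matrix (Fin d₁) (Fin d₂) ℝ :=
  Matrix.vecMulVec x y

/-- The Frobenius norm of a real matrix. -/
noncomputable def frob {d₁ d₂ : ℕ} (A : Matrix (Fin d₁) (Fin d₂) ℝ) : ℝ :=
  Real.sqrt (∑ i, ∑ j, (A i j) ^ 2)

attribute [local instance] Matrix.frobeniusSeminormedAddCommGroup
  Matrix.frobeniusNormedAddCommGroup Matrix.frobeniusNormedSpace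

lemma frob_eq_norm {d₁ d₂ : ℕ} (A : Matrix (Fin d₁) (Fin d₂) ℝ) : frob A = ‖A‖ := by
  rw [Matrix.frobenius_norm_def, frob, Real.sqrt_eq_rpow]
  congr 1
  refine Finset.sum_congr rfl fun i _ => Finset.sum_congr rfl fun j _ => ?_
  rw [Real.norm_eq_abs, show ((2:ℝ)) = ((2:ℕ):ℝ) by norm_num, Real.rpow_natCast, sq_abs]

lemma frob_outer {d₁ d₂ : ℕ} (a : EuclideanSpace ℝ (Fin d₁)) (b : EuclideanSpace ℝ (Fin d₂)) :
    frob (outer a b) = ‖a‖ * ‖b‖ := by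
  rw [frob, EuclideanSpace.norm_eq, EuclideanSpace.norm_eq, ← Real.sqrt_mul (by positivity)]
  congr 1
  simp only [outer, Matrix.vecMulVec_apply, Real.norm_eq_abs, sq_abs, mul_pow]
  rw [Finset.sum_mul_sum]

/-- The SAM perturbation displaces the outer product x yᵀ by at most
ρ(‖x‖ + ‖y‖) + ρ²/2 in Frobenius norm. -/
theorem sam_nop_product_displacement_bound {d₁ d₂ : ℕ}
    (x : EuclideanSpace ℝ (Fin d₁)) (y : EuclideanSpace ℝ (Fin d₂))
    (G : Matrix (Fin d₁) (Fin d₂) ℝ)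
    (hpos : 0 < ‖mv G y‖ ^ 2 + ‖mv Gᵀ x‖ ^ 2)
    (ρ : ℝ) (hρ : 0 ≤ ρ)
    (u : ℝ) (hu : u = (Real.sqrt (‖mv G y‖ ^ 2 + ‖mv Gᵀ x‖ ^ 2))⁻¹) :
    frob (outer (x + (ρ * u) • mv G y) (y + (ρ * u) • mv Gᵀ x) - outer x y)
      ≤ ρ * (‖x‖ + ‖y‖) + ρ ^ 2 / 2 := by
  set gx := mv G y
  set gy := mv Gᵀ x
  set s := ρ * u
  set S := ‖gx‖ ^ 2 + ‖gy‖ ^ 2 with hS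
  have hsqS : 0 < Real.sqrt S := Real.sqrt_pos.2 hpos
  have hu0 : 0 < u := hu ▸ inv_pos.2 hsqS
  have hgx : u * ‖gx‖ ≤ 1 := by
    rw [hu, inv_mul_le_iff₀ hsqS, mul_one,
      show ‖gx‖ = Real.sqrt (‖gx‖ ^ 2) from (Real.sqrt_sq (norm_nonneg _)).symm]
    exact Real.sqrt_le_sqrt (by nlinarith [sq_nonneg ‖gy‖])
  have hgy : u * ‖gy‖ ≤ 1 := by
    rw [hu, inv_mul_le_iff₀ hsqS, mul_one,
      show ‖gy‖ = Real.sqrt (‖gy‖ ^ 2) from (Real.sqrt_sq (norm_nonneg _)).symm]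
    exact Real.sqrt_le_sqrt (by nlinarith [sq_nonneg ‖gx‖])
  have hsplit : outer (x + s • gx) (y + s • gy) - outer x y
      = s • outer gx y + s • outer x gy + (s * s) • outer gx gy := by
    ext i j
    simp [outer, Matrix.vecMulVec_apply, Matrix.add_apply, Matrix.sub_apply,
      Matrix.smul_apply, smul_eq_mul, PiLp.add_apply, PiLp.smul_apply]
    ring
  rw [hsplit, frob_eq_norm]
  have tri : ‖s • outer gx y + s • outer x gy + (s * s) • outer gx gy‖
      ≤ ‖s • outer gx y‖ + ‖s • outer x gy‖ + ‖(s * s) • outer gx gy‖ :=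
    norm_add₃_le
  have h1 : ‖s • outer gx y‖ = |s| * (‖gx‖ * ‖y‖) := by
    rw [norm_smul, Real.norm_eq_abs, ← frob_eq_norm, frob_outer]
  have h2 : ‖s • outer x gy‖ = |s| * (‖x‖ * ‖gy‖) := by
    rw [norm_smul, Real.norm_eq_abs, ← frob_eq_norm, frob_outer]
  have h3 : ‖(s * s) • outer gx gy‖ = |s * s| * (‖gx‖ * ‖gy‖) := by
    rw [norm_smul, Real.norm_eq_abs, ← frob_eq_norm, frob_outer]
  have hs0 : 0 ≤ s := mul_nonneg hρ hu0.le
  rw [h1, h2, h3, abs_of_nonneg hs0, abs_of_nonneg (mul_nonneg hs0 hs0)] at tri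
  have b1 : s * (‖gx‖ * ‖y‖) ≤ ρ * ‖y‖ := by
    have : s * ‖gx‖ ≤ ρ := by
      calc s * ‖gx‖ = ρ * (u * ‖gx‖) := by ring
      _ ≤ ρ * 1 := by exact mul_le_mul_of_nonneg_left hgx hρ
      _ = ρ := mul_one ρ
    calc s * (‖gx‖ * ‖y‖) = (s * ‖gx‖) * ‖y‖ := by ring
    _ ≤ ρ * ‖y‖ := mul_le_mul_of_nonneg_right this (norm_nonneg _)
  have b2 : s * (‖x‖ * ‖gy‖) ≤ ρ * ‖x‖ := by
    have : s * ‖gy‖ ≤ ρ := by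
      calc s * ‖gy‖ = ρ * (u * ‖gy‖) := by ring
      _ ≤ ρ * 1 := by exact mul_le_mul_of_nonneg_left hgy hρ
      _ = ρ := mul_one ρ
    calc s * (‖x‖ * ‖gy‖) = ‖x‖ * (s * ‖gy‖) := by ring
    _ ≤ ‖x‖ * ρ := mul_le_mul_of_nonneg_left this (norm_nonneg _)
    _ = ρ * ‖x‖ := mul_comm _ _
  have b3 : s * s * (‖gx‖ * ‖gy‖) ≤ ρ ^ 2 / 2 := by
    have h2ab : ‖gx‖ * ‖gy‖ ≤ S / 2 := by nlinarith [sq_nonneg (‖gx‖ - ‖gy‖)]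
    have huS : u * u * S = 1 := by
      rw [hu]
      have : Real.sqrt S * Real.sqrt S = S := Real.mul_self_sqrt hpos.le
      field_simp
      rw [sq, this]
    calc s * s * (‖gx‖ * ‖gy‖) ≤ s * s * (S / 2) :=
          mul_le_mul_of_nonneg_left h2ab (mul_nonneg hs0 hs0)
      _ = ρ ^ 2 * (u * u * S) / 2 := by ring
      _ = ρ ^ 2 / 2 := by rw [huS]; ring
  linarith
end

section
/- Let ρ ∈ ℝ, let x, y : ℝ → ℝ^d be differentiable curves, and let c̃, u : ℝ → ℝ be arbitrary functions such that for every t the derivatives satisfy x'(t) = −c̃(t) • (y(t) + ρ u(t) • x(t)) and y'(t) = −c̃(t) • (x(t) + ρ u(t) • y(t)). Then for every t, the derivative of B(t) := ½(‖x(t)‖² − ‖y(t)‖²) equals −2 ρ u(t) c̃(t) B(t). -/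
open scoped RealInnerProductSpace

/-- Exact dynamics of balancedness under SAM's limiting flow on the
overparametrized problem: `B' = −2 ρ u c̃ B`. -/
theorem sam_op_balancedness_dynamics {d : ℕ} (ρ : ℝ)
    (x y : ℝ → EuclideanSpace ℝ (Fin d)) (c' u : ℝ → ℝ)
    (hx : ∀ t, HasDerivAt x (-(c' t • (y t + (ρ * u t) • x t))) t)
    (hy : ∀ t, HasDerivAt y (-(c' t • (x t + (ρ * u t) • y t))) t) :
    ∀ t, HasDerivAt (fun s => (1 / 2 : ℝ) * (‖x s‖ ^ 2 - ‖y s‖ ^ 2))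
      (-2 * ρ * u t * c' t * ((1 / 2 : ℝ) * (‖x t‖ ^ 2 - ‖y t‖ ^ 2))) t := by
  intro t
  have h := (((hx t).norm_sq.sub (hy t).norm_sq).const_mul ((1:ℝ)/2))
  refine h.congr_deriv ?_
  have hxx : ⟪x t, x t⟫ = ‖x t‖ ^ 2 := real_inner_self_eq_norm_sq _
  have hyy : ⟪y t, y t⟫ = ‖y t‖ ^ 2 := real_inner_self_eq_norm_sq _
  have hxy : ⟪x t, y t⟫ = ⟪y t, x t⟫ := real_inner_comm _ _
  simp only [inner_neg_right, inner_smul_right, inner_add_right, hxx, hyy, hxy]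
  ring
end

section
/- Let ρ > 0, let x, y : ℝ → ℝ^d be differentiable curves with ‖x(t)‖² + ‖y(t)‖² > 0 for all t, let c, c̃ : ℝ → ℝ and δ : ℝ → ℝ satisfy |c̃(t) − c(t)| ≤ δ(t) with δ(t) ≥ 0, define u(t) := sign(c(t)) / √(‖x(t)‖² + ‖y(t)‖²), and suppose x'(t) = −c̃(t) • (y(t) + ρ u(t) • x(t)) and y'(t) = −c̃(t) • (x(t) + ρ u(t) • y(t)). Let B(t) := ½(‖x(t)‖² − ‖y(t)‖²). Then for every t: (i) ρ|c(t)|·|‖x(t)‖ − ‖y(t)‖| − 2ρ δ(t) |B(t)|/√(‖x(t)‖² + ‖y(t)‖²) ≤ |B'(t)| ≤ ρ|c(t)| √(2|B(t)|) + 2ρ δ(t) |B(t)|/√(‖x(t)‖² + ‖y(t)‖²); and (ii) if B(t) ≠ 0 and |c(t)|·|‖x(t)‖ − ‖y(t)‖| > 2 δ(t) |B(t)|/√(‖x(t)‖² + ‖y(t)‖²), then B(t)·B'(t) < 0, i.e., the magnitude of B is strictly decreasing at t. -/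
open scoped RealInnerProductSpace

set_option maxHeartbeats 1000000 in
lemma sam_op_aux (ρ a b s cc K dd Bt D : ℝ) (hρ : 0 < ρ) (ha : 0 ≤ a) (hb : 0 ≤ b)
    (hs : s = Real.sqrt (a ^ 2 + b ^ 2)) (hS : 0 < a ^ 2 + b ^ 2) (hdd : 0 ≤ dd)
    (hK : abs (K - |cc|) ≤ dd) (hBt : Bt = (1 / 2 : ℝ) * (a ^ 2 - b ^ 2))
    (hD : D = -(2 * ρ * K * Bt) / s) :
    (ρ * |cc| * |a - b| - 2 * ρ * dd * |Bt| / s ≤ |D| ∧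
      |D| ≤ ρ * |cc| * Real.sqrt (2 * |Bt|) + 2 * ρ * dd * |Bt| / s) ∧
    (Bt ≠ 0 → 2 * dd * |Bt| / s < |cc| * |a - b| → Bt * D < 0) := by
  have hs0 : 0 < s := by rw [hs]; exact Real.sqrt_pos.2 hS
  have hs2 : s ^ 2 = a ^ 2 + b ^ 2 := by rw [hs]; exact Real.sq_sqrt hS.le
  have h2B : 2 * |Bt| = |a ^ 2 - b ^ 2| := by
    rw [hBt, abs_mul, abs_of_pos (show (0:ℝ) < 1 / 2 by norm_num)]; ring
  have hDabs : |D| = 2 * ρ * |K| * |Bt| / s := by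
    rw [hD, abs_div, abs_neg, abs_of_pos hs0, abs_mul, abs_mul, abs_mul,
      abs_of_pos hρ, abs_two]
  have hKub : |K| ≤ |cc| + dd := by
    have h1 : K = |cc| + (K - |cc|) := by ring
    calc |K| = abs (|cc| + (K - |cc|)) := by rw [← h1]
      _ ≤ abs (|cc|) + abs (K - |cc|) := abs_add_le _ _
      _ ≤ |cc| + dd := by rw [abs_abs]; linarith
  have hKlb : |cc| - dd ≤ |K| := by
    have h1 := abs_sub_abs_le_abs_sub (|cc|) K
    rw [abs_abs, abs_sub_comm] at h1
    linarith
  have hsqrtle : Real.sqrt (2 * |Bt|) ≤ s := by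
    rw [hs]
    apply Real.sqrt_le_sqrt
    rw [h2B]
    exact abs_le.mpr ⟨by nlinarith [sq_nonneg a, sq_nonneg b],
      by nlinarith [sq_nonneg a, sq_nonneg b]⟩
  have hfact1 : 2 * |Bt| ≤ s * Real.sqrt (2 * |Bt|) := by
    have hq := Real.sq_sqrt (show (0:ℝ) ≤ 2 * |Bt| by positivity)
    nlinarith [Real.sqrt_nonneg (2 * |Bt|), hsqrtle]
  have hfact2 : s * |a - b| ≤ 2 * |Bt| := by
    have h1 : |a ^ 2 - b ^ 2| = |a - b| * (a + b) := by
      rw [← abs_of_nonneg (add_nonneg ha hb), ← abs_mul]; ring_nf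
    have h2 : s ≤ a + b := by
      rw [hs]
      calc Real.sqrt (a ^ 2 + b ^ 2) ≤ Real.sqrt ((a + b) ^ 2) :=
            Real.sqrt_le_sqrt (by nlinarith [mul_nonneg ha hb])
        _ = a + b := Real.sqrt_sq (add_nonneg ha hb)
    rw [h2B, h1]
    nlinarith [abs_nonneg (a - b)]
  constructor
  · constructor
    · rw [hDabs]
      have key : ρ * |cc| * |a - b| * s - 2 * ρ * dd * |Bt| ≤ 2 * ρ * |K| * |Bt| := by
        nlinarith [mul_le_mul_of_nonneg_right hKlb (show (0:ℝ) ≤ 2 * ρ * |Bt| by positivity),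
          mul_le_mul_of_nonneg_left hfact2 (show (0:ℝ) ≤ ρ * |cc| by positivity)]
      calc ρ * |cc| * |a - b| - 2 * ρ * dd * |Bt| / s
          = (ρ * |cc| * |a - b| * s - 2 * ρ * dd * |Bt|) / s := by
            field_simp
        _ ≤ 2 * ρ * |K| * |Bt| / s := (div_le_div_iff_of_pos_right hs0).mpr key
    · rw [hDabs]
      have key : 2 * ρ * |K| * |Bt| ≤ ρ * |cc| * Real.sqrt (2 * |Bt|) * s + 2 * ρ * dd * |Bt| := by
        nlinarith [mul_le_mul_of_nonneg_right hKub (show (0:ℝ) ≤ 2 * ρ * |Bt| by positivity),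
          mul_le_mul_of_nonneg_left hfact1 (show (0:ℝ) ≤ ρ * |cc| by positivity)]
      calc 2 * ρ * |K| * |Bt| / s
          ≤ (ρ * |cc| * Real.sqrt (2 * |Bt|) * s + 2 * ρ * dd * |Bt|) / s := (div_le_div_iff_of_pos_right hs0).mpr key
        _ = ρ * |cc| * Real.sqrt (2 * |Bt|) + 2 * ρ * dd * |Bt| / s := by
            field_simp
  · intro hBne hlt
    have h0 : 0 < |cc| * |a - b| := lt_of_le_of_lt (by positivity) hlt
    have hab : 0 < |a - b| := by
      rcases mul_pos_iff.mp h0 with ⟨h1, h2⟩ | ⟨h1, h2⟩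
      · exact h2
      · exact absurd h1 (not_lt.2 (abs_nonneg _))
    have hdlt : dd < |cc| := by
      have h4 : dd * |a - b| ≤ 2 * dd * |Bt| / s := by
        rw [le_div_iff₀ hs0]
        nlinarith [mul_le_mul_of_nonneg_left hfact2 hdd]
      have h5 : dd * |a - b| < |cc| * |a - b| := lt_of_le_of_lt h4 hlt
      exact lt_of_mul_lt_mul_right h5 (abs_nonneg _)
    have hKpos : 0 < K := by
      have h6 := (abs_le.mp hK).1
      have h7 := abs_nonneg cc
      linarith
    rw [hD]
    have heq : Bt * (-(2 * ρ * K * Bt) / s) = -(2 * ρ * K * Bt ^ 2 / s) := by ring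
    have hpos2 : 0 < 2 * ρ * K * Bt ^ 2 / s := by positivity
    rw [heq]
    linarith

set_option maxHeartbeats 1000000 in
/-- Theorem 4: two-sided rate bounds on the balancedness `B` under SAM's limiting
flow for the overparametrized problem, and strict decrease of `|B|` when the
driving term dominates the error. -/
theorem sam_op_balancedness_rate_bounds {d : ℕ} (ρ : ℝ) (hρ : 0 < ρ)
    (x y : ℝ → EuclideanSpace ℝ (Fin d))
    (hpos : ∀ t, 0 < ‖x t‖ ^ 2 + ‖y t‖ ^ 2)
    (c c' δ : ℝ → ℝ)
    (hδ0 : ∀ t, 0 ≤ δ t)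
    (hδ : ∀ t, |c' t - c t| ≤ δ t)
    (u : ℝ → ℝ)
    (hu : ∀ t, u t = Real.sign (c t) / Real.sqrt (‖x t‖ ^ 2 + ‖y t‖ ^ 2))
    (hx : ∀ t, HasDerivAt x (-(c' t • (y t + (ρ * u t) • x t))) t)
    (hy : ∀ t, HasDerivAt y (-(c' t • (x t + (ρ * u t) • y t))) t)
    (B : ℝ → ℝ) (hB : ∀ t, B t = (1 / 2 : ℝ) * (‖x t‖ ^ 2 - ‖y t‖ ^ 2)) :
    ∀ t,
      (ρ * |c t| * |‖x t‖ - ‖y t‖|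
          - 2 * ρ * δ t * |B t| / Real.sqrt (‖x t‖ ^ 2 + ‖y t‖ ^ 2)
        ≤ |deriv B t| ∧
       |deriv B t|
        ≤ ρ * |c t| * Real.sqrt (2 * |B t|)
          + 2 * ρ * δ t * |B t| / Real.sqrt (‖x t‖ ^ 2 + ‖y t‖ ^ 2)) ∧
      (B t ≠ 0 →
        2 * δ t * |B t| / Real.sqrt (‖x t‖ ^ 2 + ‖y t‖ ^ 2)
          < |c t| * |‖x t‖ - ‖y t‖| →
        B t * deriv B t < 0) := by
  intro t
  have hBfun : B = fun τ => (1 / 2 : ℝ) * (⟪x τ, x τ⟫ - ⟪y τ, y τ⟫) := by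
    funext τ
    rw [hB τ, real_inner_self_eq_norm_sq, real_inner_self_eq_norm_sq]
  have hBd : HasDerivAt B ((1 / 2 : ℝ) *
      ((⟪x t, -(c' t • (y t + (ρ * u t) • x t))⟫ +
        ⟪-(c' t • (y t + (ρ * u t) • x t)), x t⟫) -
       (⟪y t, -(c' t • (x t + (ρ * u t) • y t))⟫ +
        ⟪-(c' t • (x t + (ρ * u t) • y t)), y t⟫))) t := by
    rw [hBfun]
    exact (((hx t).inner ℝ (hx t)).sub ((hy t).inner ℝ (hy t))).const_mul (1 / 2)
  have hs0 : (0:ℝ) < Real.sqrt (‖x t‖ ^ 2 + ‖y t‖ ^ 2) :=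
    Real.sqrt_pos.2 (hpos t)
  have hderiv : deriv B t =
      -(2 * ρ * (Real.sign (c t) * c' t) * B t) / Real.sqrt (‖x t‖ ^ 2 + ‖y t‖ ^ 2) := by
    rw [hBd.deriv, hB t, hu t]
    simp only [inner_neg_left, inner_neg_right, inner_add_left, inner_add_right,
      real_inner_smul_left, real_inner_smul_right, real_inner_self_eq_norm_sq,
      real_inner_comm (y t) (x t)]
    field_simp
    ring_nf
  have hKnear : abs (Real.sign (c t) * c' t - |c t|) ≤ δ t := by
    have hsc : Real.sign (c t) * c t = |c t| := by
      rcases lt_trichotomy (c t) 0 with h | h | h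
      · rw [Real.sign_of_neg h, abs_of_neg h]; ring
      · simp [h]
      · rw [Real.sign_of_pos h, abs_of_pos h]; ring
    have hsign1 : |Real.sign (c t)| ≤ 1 := by
      rcases lt_trichotomy (c t) 0 with h | h | h
      · rw [Real.sign_of_neg h]; norm_num
      · simp [h]
      · rw [Real.sign_of_pos h]; norm_num
    have h1 : Real.sign (c t) * c' t - |c t| = Real.sign (c t) * (c' t - c t) := by
      rw [← hsc]; ring
    rw [h1, abs_mul]
    calc |Real.sign (c t)| * |c' t - c t| ≤ 1 * (δ t) :=
          mul_le_mul hsign1 (hδ t) (abs_nonneg _) zero_le_one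
      _ = δ t := one_mul _
  exact sam_op_aux ρ ‖x t‖ ‖y t‖ (Real.sqrt (‖x t‖ ^ 2 + ‖y t‖ ^ 2)) (c t)
    (Real.sign (c t) * c' t) (δ t) (B t) (deriv B t) hρ (norm_nonneg _) (norm_nonneg _)
    rfl (hpos t) (hδ0 t) hKnear (hB t) hderiv
end

section
/- Let ρ ∈ ℝ, m ≥ 1, let x, y : ℝ → ℝ^d be differentiable curves, and let c̃ᵢ, uᵢ : ℝ → ℝ for i ∈ Fin m be arbitrary functions such that for every t the derivatives satisfy x'(t) = −(1/m) ∑_{i} c̃ᵢ(t) • (y(t) + ρ uᵢ(t) • x(t)) and y'(t) = −(1/m) ∑_{i} c̃ᵢ(t) • (x(t) + ρ uᵢ(t) • y(t)). Then for every t, the derivative of B(t) := ½(‖x(t)‖² − ‖y(t)‖²) equals −(2ρ/m) (∑_{i} uᵢ(t) c̃ᵢ(t)) B(t). -/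
open scoped RealInnerProductSpace

/-- Exact balancedness dynamics of m-sharpness SAM on the overparametrized problem:
`B' = −(2ρ/m) (∑ᵢ uᵢ c̃ᵢ) B`. -/
theorem m_sharpness_op_balancedness_dynamics {d : ℕ} (ρ : ℝ) (m : ℕ) (hm : 1 ≤ m)
    (x y : ℝ → EuclideanSpace ℝ (Fin d))
    (c' u : Fin m → ℝ → ℝ)
    (hx : ∀ t, HasDerivAt x
      (-((m : ℝ)⁻¹ • ∑ i : Fin m, c' i t • (y t + (ρ * u i t) • x t))) t)
    (hy : ∀ t, HasDerivAt y
      (-((m : ℝ)⁻¹ • ∑ i : Fin m, c' i t • (x t + (ρ * u i t) • y t))) t) :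
    ∀ t, HasDerivAt (fun s => (1 / 2 : ℝ) * (‖x s‖ ^ 2 - ‖y s‖ ^ 2))
      (-(2 * ρ / (m : ℝ)) * (∑ i : Fin m, u i t * c' i t)
        * ((1 / 2 : ℝ) * (‖x t‖ ^ 2 - ‖y t‖ ^ 2))) t := by
  intro t
  have hm' : (m : ℝ) ≠ 0 := by positivity
  have hx2 : HasDerivAt (fun s => ⟪x s, x s⟫)
      (⟪x t, -((m : ℝ)⁻¹ • ∑ i : Fin m, c' i t • (y t + (ρ * u i t) • x t))⟫ +
        ⟪-((m : ℝ)⁻¹ • ∑ i : Fin m, c' i t • (y t + (ρ * u i t) • x t)), x t⟫) t :=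
    (hx t).inner ℝ (hx t)
  have hy2 : HasDerivAt (fun s => ⟪y s, y s⟫)
      (⟪y t, -((m : ℝ)⁻¹ • ∑ i : Fin m, c' i t • (x t + (ρ * u i t) • y t))⟫ +
        ⟪-((m : ℝ)⁻¹ • ∑ i : Fin m, c' i t • (x t + (ρ * u i t) • y t)), y t⟫) t :=
    (hy t).inner ℝ (hy t)
  have h := ((hx2.sub hy2).const_mul (1 / 2 : ℝ))
  have heq : ∀ s, (1 / 2 : ℝ) * (⟪x s, x s⟫ - ⟪y s, y s⟫)
      = (1 / 2 : ℝ) * (‖x s‖ ^ 2 - ‖y s‖ ^ 2) := by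
    intro s; rw [real_inner_self_eq_norm_sq, real_inner_self_eq_norm_sq]
  simp only [Pi.sub_apply] at h
  rw [show (fun s => (1 / 2 : ℝ) * (⟪x s, x s⟫ - ⟪y s, y s⟫))
      = (fun s => (1 / 2 : ℝ) * (‖x s‖ ^ 2 - ‖y s‖ ^ 2)) from funext heq] at h
  convert h using 1
  case e'_4 | e'_5 => rfl
  rw [← real_inner_self_eq_norm_sq, ← real_inner_self_eq_norm_sq]
  simp only [inner_neg_left, inner_neg_right, inner_smul_left, inner_smul_right,
    inner_sum, sum_inner, real_inner_smul_left, real_inner_smul_right,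
    inner_add_left, inner_add_right, RCLike.conj_to_real, conj_trivial]
  rw [real_inner_comm (y t) (x t)]
  simp only [Finset.mul_sum, neg_add_rev, ← Finset.sum_neg_distrib, Finset.sum_mul,
    ← Finset.sum_sub_distrib, ← Finset.sum_add_distrib]
  refine Finset.sum_congr rfl fun i _ => ?_
  field_simp
  ring
end
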